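/- arXiv:2503.19399 — 2 statements merged into one kernel-verified Lean document; each statement's English description precedes it below -/
import Mathlib

section
/- For all integers n ≥ 0 and i ≥ 1, ā_{2i}(8n + 6) ≡ 0 (mod 4). -/
/-- `fk k` is the infinite product `∏_{n ≥ 1} (1 - q^{k n})` in `ℤ[[q]]`, defined
coefficientwise via stable partial products. -/
noncomputable def fk (k : ℕ) : PowerSeries ℤ :=
  PowerSeries.mk fun n =>
    PowerSeries.coeff n
      (∏ m ∈ Finset.Icc 1 (n + 1), (1 - (PowerSeries.X : PowerSeries ℤ) ^ (k * m)))

/-- `a : ℕ → ℕ` is the generalized overcubic partition function `ā_c`, i.e.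
`(∑_{n≥0} ā_c(n) q^n) · f_1^2 · f_2^{2c} = f_2^3 · f_4^{c-1}` in `ℤ[[q]]`
(equivalently `∑_{n≥0} ā_c(n) q^n = f_4^{c-1}/(f_1^2 f_2^{2c-3})`). -/
def IsGenOvercubic (c : ℕ) (a : ℕ → ℕ) : Prop :=
  (PowerSeries.mk fun n => (a n : ℤ)) * (fk 1) ^ 2 * (fk 2) ^ (2 * c) =
    (fk 2) ^ 3 * (fk 4) ^ (c - 1)

open PowerSeries Finset

noncomputable section
namespace OC

abbrev R := PowerSeries ℤ
abbrev XX : R := PowerSeries.X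

/-- congruence mod X^N -/
def cong (N : ℕ) (a b : R) : Prop := XX ^ N ∣ a - b

lemma cong_refl {N a} : cong N a a := by simp [cong]

lemma cong_symm {N a b} (h : cong N a b) : cong N b a := by
  have := h.neg_right
  rw [cong, ← neg_sub]
  exact this

lemma cong_trans {N a b c} (h1 : cong N a b) (h2 : cong N b c) : cong N a c := by
  have := dvd_add h1 h2
  rw [cong]
  have e : a - b + (b - c) = a - c := by ring
  rwa [e] at this

lemma cong_add {N a b c d} (h1 : cong N a b) (h2 : cong N c d) :
    cong N (a + c) (b + d) := by
  have := dvd_add h1 h2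
  rw [cong]
  have e : a - b + (c - d) = a + c - (b + d) := by ring
  rwa [e] at this

lemma cong_mul {N a b c d} (h1 : cong N a b) (h2 : cong N c d) :
    cong N (a * c) (b * d) := by
  have : a * c - b * d = (a - b) * c + b * (c - d) := by ring
  rw [cong, this]
  exact dvd_add (h1.mul_right c) (h2.mul_left b)

lemma cong_pow {N a b} (h : cong N a b) (k : ℕ) : cong N (a ^ k) (b ^ k) := by
  induction k with
  | zero => simpa using cong_refl
  | succ k ih => rw [pow_succ, pow_succ]; exact cong_mul ih h

lemma cong_sum {N : ℕ} {ι : Type*} (s : Finset ι) (f g : ι → R)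
    (h : ∀ i ∈ s, cong N (f i) (g i)) :
    cong N (∑ i ∈ s, f i) (∑ i ∈ s, g i) := by
  classical
  induction s using Finset.induction with
  | empty => simpa using cong_refl
  | insert a s hx ih =>
    rw [Finset.sum_insert hx, Finset.sum_insert hx]
    exact cong_add (h a (Finset.mem_insert_self a s))
      (ih fun i hi => h i (Finset.mem_insert_of_mem hi))

lemma cong_of_le {N M a b} (h : cong N a b) (hM : M ≤ N) : cong M a b :=
  dvd_trans (pow_dvd_pow _ hM) h

lemma cong_coeff {N a b} (h : cong N a b) {n : ℕ} (hn : n < N) :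
    PowerSeries.coeff n a = PowerSeries.coeff n b := by
  have := (PowerSeries.X_pow_dvd_iff.mp h) n hn
  simpa [sub_eq_zero] using this

lemma eq_of_forall_cong {a b : R} (h : ∀ N, cong N a b) : a = b := by
  ext n
  exact cong_coeff (h (n+1)) (Nat.lt_succ_self n)

lemma cong_zero_of_dvd {N : ℕ} {a : R} (h : XX ^ N ∣ a) : cong N a 0 := by
  simpa [cong] using h

lemma cong_X_pow_zero {N e : ℕ} (h : N ≤ e) : cong N (XX ^ e) 0 :=
  cong_zero_of_dvd (pow_dvd_pow _ h)


/-! ### Gaussian binomial coefficients (times nothing), via q-Pascal recursion -/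

/-- `gb t m j` is the Gaussian binomial `(m choose j)_t`, defined by the q-Pascal rule. -/
def gb (t : R) : ℕ → ℤ → R
  | 0, j => if j = 0 then 1 else 0
  | (m+1), j => gb t m (j-1) + t ^ j.toNat * gb t m j

lemma gb_neg (t : R) : ∀ (m : ℕ) {j : ℤ}, j < 0 → gb t m j = 0
  | 0, j, hj => by simp [gb, hj.ne]
  | (m+1), j, hj => by
      rw [gb, gb_neg t m (by omega), gb_neg t m hj]
      simp

lemma gb_gt (t : R) : ∀ (m : ℕ) {j : ℤ}, (m : ℤ) < j → gb t m j = 0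
  | 0, j, hj => by simp [gb]; omega
  | (m+1), j, hj => by
      rw [gb, gb_gt t m (by omega), gb_gt t m (by omega)]
      simp

lemma gb_zero (t : R) : ∀ m : ℕ, gb t m 0 = 1
  | 0 => by simp [gb]
  | (m+1) => by
      rw [gb, gb_neg t m (by omega), gb_zero t m]
      simp

/-- unfolding lemma -/
lemma gb_succ (t : R) (m : ℕ) (j : ℤ) :
    gb t (m+1) j = gb t m (j-1) + t ^ j.toNat * gb t m j := rfl

/-- The second q-Pascal rule. -/
lemma gb_pascal2 (t : R) : ∀ (m : ℕ) (j : ℤ),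
    gb t (m+1) j = t ^ ((m+1:ℤ) - j).toNat * gb t m (j-1) + gb t m j
  | 0, j => by
      rcases eq_or_ne j 0 with rfl | h0
      · norm_num [gb_succ, gb]
      rcases eq_or_ne j 1 with rfl | h1
      · norm_num [gb_succ, gb]
      · rw [gb_succ, show gb t 0 j = 0 by simp [gb, h0],
          show gb t 0 (j-1) = 0 by simp [gb]; omega]
        simp
  | (m+1), j => by
      by_cases hlo : j ≤ 0
      · rcases eq_or_ne j 0 with rfl | h0
        · rw [gb_zero, gb_zero, gb_neg t _ (show (0:ℤ)-1 < 0 by omega), mul_zero, zero_add]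
        · rw [gb_neg t _ (show j < 0 by omega), gb_neg t _ (show j < 0 by omega),
            gb_neg t _ (show j - 1 < 0 by omega)]
          simp
      by_cases hhi : (m+2:ℤ) < j
      · rw [gb_gt t (m+1+1) (show ((m+1+1:ℕ):ℤ) < j by push_cast; omega),
          gb_gt t (m+1) (show ((m+1:ℕ):ℤ) < j by push_cast; omega),
          gb_gt t (m+1) (show ((m+1:ℕ):ℤ) < j - 1 by push_cast; omega)]
        simp
      -- now 1 ≤ j ≤ m+2
      have h1 : 1 ≤ j := by omega
      have h2 : j ≤ (m:ℤ)+2 := by omega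
      have elhs : gb t (m+1+1) j
          = (t ^ (((m:ℤ)+2) - j).toNat * gb t m (j-1-1) + gb t m (j-1))
            + t ^ j.toNat * (t ^ (((m:ℤ)+1) - j).toNat * gb t m (j-1) + gb t m j) := by
        rw [gb_succ t (m+1) j, gb_pascal2 t m (j-1), gb_pascal2 t m j,
          show ((m:ℤ)+1) - (j-1) = ((m:ℤ)+2) - j by ring]
      have hcast : ((m+1:ℕ):ℤ) + 1 - j = ((m:ℤ)+2) - j := by push_cast; ring
      have erhs : t ^ (((m:ℤ)+2) - j).toNat * gb t (m+1) (j-1) + gb t (m+1) j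
          = t ^ (((m:ℤ)+2) - j).toNat * (gb t m (j-1-1) + t ^ (j-1).toNat * gb t m (j-1))
            + (gb t m (j-1) + t ^ j.toNat * gb t m j) := by
        rw [gb_succ t m (j-1), gb_succ t m j]
      rw [elhs, hcast, erhs]
      by_cases hj : j = (m:ℤ) + 2
      · rw [show gb t m (j-1) = 0 from gb_gt t m (by omega)]
        ring
      · have k1 : t ^ j.toNat * t ^ (((m:ℤ)+1) - j).toNat = t ^ (m+1) := by
          rw [← pow_add]; congr 1; omega
        have k2 : t ^ (((m:ℤ)+2) - j).toNat * t ^ (j-1).toNat = t ^ (m+1) := by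
          rw [← pow_add]; congr 1; omega
        calc (t ^ (((m:ℤ)+2) - j).toNat * gb t m (j-1-1) + gb t m (j-1))
            + t ^ j.toNat * (t ^ (((m:ℤ)+1) - j).toNat * gb t m (j-1) + gb t m j)
            = t ^ (((m:ℤ)+2) - j).toNat * gb t m (j-1-1) + gb t m (j-1)
              + (t ^ j.toNat * t ^ (((m:ℤ)+1) - j).toNat) * gb t m (j-1)
              + t ^ j.toNat * gb t m j := by ring
          _ = t ^ (((m:ℤ)+2) - j).toNat * gb t m (j-1-1) + gb t m (j-1)
              + (t ^ (((m:ℤ)+2) - j).toNat * t ^ (j-1).toNat) * gb t m (j-1)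
              + t ^ j.toNat * gb t m j := by rw [k1, k2]
          _ = _ := by ring

/-- Partial products `∏_{s=1}^r (1 - t^s)`. -/
def W (t : R) (r : ℕ) : R := ∏ s ∈ Finset.Icc 1 r, (1 - t ^ s)

lemma W_succ (t : R) (r : ℕ) : W t (r+1) = W t r * (1 - t ^ (r+1)) := by
  rw [W, W, Finset.prod_Icc_succ_top (by omega)]

/-- Closed form: `gb t m j * W t j * W t l = W t m` when `j + l = m`. -/
lemma gb_closed (t : R) : ∀ (m j l : ℕ), j + l = m →
    gb t m (j : ℤ) * W t j * W t l = W t m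
  | 0, j, l, h => by
      obtain ⟨rfl, rfl⟩ : j = 0 ∧ l = 0 := by omega
      simp [gb, W]
  | (m+1), j, l, h => by
      rcases Nat.eq_zero_or_pos j with rfl | hj
      · have : l = m + 1 := by omega
        subst this
        push_cast
        simp [gb_zero, W]
      rcases Nat.eq_zero_or_pos l with rfl | hl
      · have hjm : j = m + 1 := by omega
        subst hjm
        have e0 : gb t (m+1) ((m+1:ℕ):ℤ) = gb t m (m:ℤ) := by
          rw [gb_succ, show ((m+1:ℕ):ℤ) - 1 = (m:ℤ) by push_cast; ring,
            gb_gt t m (show (m:ℤ) < ((m+1:ℕ):ℤ) by push_cast; omega), mul_zero, add_zero]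
        have IH := gb_closed t m m 0 (by omega)
        rw [show W t 0 = 1 by simp [W], mul_one] at IH ⊢
        rw [e0, W_succ]
        calc gb t m (m:ℤ) * (W t m * (1 - t^(m+1)))
            = (gb t m (m:ℤ) * W t m) * (1 - t^(m+1)) := by ring
          _ = W t m * (1 - t^(m+1)) := by rw [IH]
      -- 1 ≤ j, 1 ≤ l
      have IH1 := gb_closed t m (j-1) l (by omega)
      have IH2 := gb_closed t m j (l-1) (by omega)
      have eW : W t j = W t (j-1) * (1 - t ^ j) := by
        conv_lhs => rw [show j = (j-1)+1 by omega, W_succ, show j - 1 + 1 = j by omega]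
      have eW2 : W t l = W t (l-1) * (1 - t ^ l) := by
        conv_lhs => rw [show l = (l-1)+1 by omega, W_succ, show l - 1 + 1 = l by omega]
      rw [eW2] at IH1
      rw [eW] at IH2
      have hp : t ^ (m+1) = t ^ j * t ^ l := by rw [← pow_add, h]
      have e1 : gb t (m+1) (j:ℤ) = gb t m ((j-1:ℕ):ℤ) + t ^ j * gb t m (j:ℤ) := by
        rw [gb_succ, show ((j:ℕ):ℤ) - 1 = ((j-1:ℕ):ℤ) by push_cast; omega,
          show ((j:ℕ):ℤ).toNat = j by omega]
      rw [e1, eW, eW2, W_succ, hp]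
      linear_combination (1 - t^j) * IH1 + t^j * (1 - t^l) * IH2


/-! ### The signed theta-like sums -/

def eps (k : ℤ) : ℤ := if Even k then 1 else -1

lemma eps_succ (k : ℤ) : eps (k+1) = -eps k := by
  rcases Int.even_or_odd k with h | h
  · have h1 : ¬ Even (k+1) := by rw [Int.even_add_one]; exact fun c => c h
    rw [eps, eps, if_pos h, if_neg h1]
  · have h0 : ¬ Even k := by
      rw [Int.even_iff]; rw [Int.odd_iff] at h; omega
    have h1 : Even (k+1) := by rw [Int.even_add_one]; exact h0
    rw [eps, eps, if_pos h1, if_neg h0]; ring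

lemma eps_pred (k : ℤ) : eps (k-1) = -eps k := by
  have := eps_succ (k-1)
  rw [sub_add_cancel] at this
  omega

lemma sum_shift (A B : ℤ) (g : ℤ → R) :
    ∑ k ∈ Finset.Icc A B, g (k+1) = ∑ j ∈ Finset.Icc (A+1) (B+1), g j := by
  apply Finset.sum_bij' (fun (k : ℤ) (_ : k ∈ Finset.Icc A B) => k+1)
    (fun (j : ℤ) (_ : j ∈ Finset.Icc (A+1) (B+1)) => j-1) <;>
    intros <;> simp_all only [Finset.mem_Icc] <;> omega

lemma sum_shift' (A B : ℤ) (g : ℤ → R) :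
    ∑ k ∈ Finset.Icc A B, g (k-1) = ∑ j ∈ Finset.Icc (A-1) (B-1), g j := by
  apply Finset.sum_bij' (fun (k : ℤ) (_ : k ∈ Finset.Icc A B) => k-1)
    (fun (j : ℤ) (_ : j ∈ Finset.Icc (A-1) (B-1)) => j+1) <;>
    intros <;> simp_all only [Finset.mem_Icc] <;> omega

/-- The central signed sum `∑_k (-1)^k q^{k²} (m choose r+k)_{q²}` with `q = X^d`. -/
def Vv (d m : ℕ) (r : ℤ) : R :=
  ∑ k ∈ Finset.Icc (-(m:ℤ)) (m:ℤ),
    PowerSeries.C (eps k) * XX ^ (d * (k^2).toNat) * gb (XX^(2*d)) m (r + k)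

/-- terms vanish outside the natural range, so the range can be enlarged. -/
lemma Vv_ext (d m : ℕ) (r : ℤ) (hr0 : 0 ≤ r) (hrm : r ≤ (m:ℤ)) (L : ℤ) (hL : (m:ℤ) ≤ L) :
    Vv d m r = ∑ k ∈ Finset.Icc (-L) L,
      PowerSeries.C (eps k) * XX ^ (d * (k^2).toNat) * gb (XX^(2*d)) m (r + k) := by
  rw [Vv]
  apply Finset.sum_subset
  · intro k hk
    simp only [Finset.mem_Icc] at hk ⊢
    omega
  · intro k hk hk'
    simp only [Finset.mem_Icc] at hk hk'
    rcases lt_or_ge ((m:ℤ)) k with h | h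
    · rw [gb_gt _ _ (show (m:ℤ) < r + k by omega), mul_zero]
    · rw [gb_neg _ _ (show r + k < 0 by omega), mul_zero]

lemma Vv_R1 (d m : ℕ) (r : ℤ) (hr : 1 ≤ r) (hrm : r ≤ (m:ℤ) + 1) :
    Vv d (m+1) r = (1 - XX ^ (d * (2*r - 1).toNat)) * Vv d m (r-1) := by
  have key : ∀ k : ℤ,
      PowerSeries.C (eps k) * XX ^ (d * (k^2).toNat) * gb (XX^(2*d)) (m+1) (r + k)
      = PowerSeries.C (eps k) * XX ^ (d * (k^2).toNat) * gb (XX^(2*d)) m ((r-1) + k)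
        - XX ^ (d * (2*r-1).toNat) *
          (PowerSeries.C (eps (k+1)) * XX ^ (d * (((k+1))^2).toNat)
            * gb (XX^(2*d)) m ((r-1) + (k+1))) := by
    intro k
    rw [gb_succ, show r + k - 1 = (r-1) + k by ring, show (r-1) + (k+1) = r + k by ring,
      eps_succ, map_neg, mul_add]
    rcases lt_or_ge (r + k) 0 with hneg | hpos
    · rw [gb_neg _ _ hneg]
      ring
    · have hsq : (k+1)^2 = k^2 + 2*k + 1 := by ring
      have hk2 : (0:ℤ) ≤ k^2 := sq_nonneg k
      have hk12 : (0:ℤ) ≤ (k+1)^2 := sq_nonneg _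
      set a := k^2 with ha
      set b := (k+1)^2 with hb
      have hNat : a.toNat + 2*((r+k).toNat) = (2*r-1).toNat + b.toNat := by omega
      have hexp : d * a.toNat + 2*d * ((r+k).toNat)
          = d * (2*r-1).toNat + d * b.toNat := by
        calc d * a.toNat + 2*d*((r+k).toNat) = d * (a.toNat + 2*((r+k).toNat)) := by ring
          _ = d * ((2*r-1).toNat + b.toNat) := by rw [hNat]
          _ = d * (2*r-1).toNat + d * b.toNat := by ring
      have hX : XX ^ (d * a.toNat) * (XX^(2*d)) ^ ((r+k).toNat)
          = XX ^ (d * (2*r-1).toNat) * XX ^ (d * b.toNat) := by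
        calc XX ^ (d * a.toNat) * (XX^(2*d)) ^ ((r+k).toNat)
            = XX ^ (d * a.toNat + 2*d*((r+k).toNat)) := by rw [← pow_mul, ← pow_add]
          _ = XX ^ (d * (2*r-1).toNat + d * b.toNat) := by rw [hexp]
          _ = XX ^ (d * (2*r-1).toNat) * XX ^ (d * b.toNat) := by rw [pow_add]
      linear_combination (PowerSeries.C (eps k) * gb (XX^(2*d)) m (r+k)) * hX
  rw [Vv, show (-((m+1:ℕ):ℤ)) = -((m:ℤ)+1) by push_cast; ring,
    show (((m+1:ℕ)):ℤ) = (m:ℤ)+1 by push_cast; ring]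
  rw [Finset.sum_congr rfl (fun k _ => key k), Finset.sum_sub_distrib, ← Finset.mul_sum]
  have e1 : ∑ k ∈ Finset.Icc (-((m:ℤ)+1)) ((m:ℤ)+1),
      PowerSeries.C (eps k) * XX ^ (d * (k^2).toNat) * gb (XX^(2*d)) m ((r-1) + k)
      = Vv d m (r-1) :=
    (Vv_ext d m (r-1) (by omega) (by omega) ((m:ℤ)+1) (by omega)).symm
  have e2 : ∑ k ∈ Finset.Icc (-((m:ℤ)+1)) ((m:ℤ)+1),
      PowerSeries.C (eps (k+1)) * XX ^ (d * (((k+1))^2).toNat)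
        * gb (XX^(2*d)) m ((r-1) + (k+1))
      = Vv d m (r-1) := by
    rw [sum_shift (-((m:ℤ)+1)) ((m:ℤ)+1)
      (fun j => PowerSeries.C (eps j) * XX ^ (d * ((j^2).toNat)) * gb (XX^(2*d)) m ((r-1) + j))]
    rw [Vv_ext d m (r-1) (by omega) (by omega) ((m:ℤ)+2) (by omega)]
    apply Finset.sum_subset
    · intro k hk; simp only [Finset.mem_Icc] at hk ⊢; omega
    · intro k hk hk'
      simp only [Finset.mem_Icc] at hk hk'
      rcases lt_or_ge ((m:ℤ)) k with h | h
      · rw [gb_gt _ _ (show (m:ℤ) < (r-1) + k by omega), mul_zero]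
      · rw [gb_neg _ _ (show (r-1) + k < 0 by omega), mul_zero]
  rw [e1, e2]
  ring

lemma Vv_R2 (d m : ℕ) (r : ℤ) (hr : 0 ≤ r) (hrm : r ≤ (m:ℤ)) :
    Vv d (m+1) r = (1 - XX ^ (d * (2*((m:ℤ) - r) + 1).toNat)) * Vv d m r := by
  have key : ∀ k : ℤ,
      PowerSeries.C (eps k) * XX ^ (d * (k^2).toNat) * gb (XX^(2*d)) (m+1) (r + k)
      = PowerSeries.C (eps k) * XX ^ (d * (k^2).toNat) * gb (XX^(2*d)) m (r + k)
        - XX ^ (d * (2*((m:ℤ)-r)+1).toNat) *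
          (PowerSeries.C (eps (k-1)) * XX ^ (d * (((k-1))^2).toNat)
            * gb (XX^(2*d)) m (r + k - 1)) := by
    intro k
    rw [gb_pascal2, show ((m:ℤ)+1) - (r+k) = ((m:ℤ)+1-r) - k by ring,
      eps_pred, map_neg]
    rcases lt_or_ge ((m:ℤ)) (r + k - 1) with hbig | hok
    · rw [gb_gt _ _ hbig]
      ring
    · have hsq : (k-1)^2 = k^2 - 2*k + 1 := by ring
      have hk2 : (0:ℤ) ≤ k^2 := sq_nonneg k
      have hk12 : (0:ℤ) ≤ (k-1)^2 := sq_nonneg _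
      set a := k^2 with ha
      set b := (k-1)^2 with hb
      have hNat : a.toNat + 2*((((m:ℤ)+1-r) - k).toNat) = (2*((m:ℤ)-r)+1).toNat + b.toNat := by
        omega
      have hexp : d * a.toNat + 2*d * ((((m:ℤ)+1-r) - k).toNat)
          = d * (2*((m:ℤ)-r)+1).toNat + d * b.toNat := by
        calc d * a.toNat + 2*d*((((m:ℤ)+1-r) - k).toNat)
            = d * (a.toNat + 2*((((m:ℤ)+1-r) - k).toNat)) := by ring
          _ = d * ((2*((m:ℤ)-r)+1).toNat + b.toNat) := by rw [hNat]
          _ = d * (2*((m:ℤ)-r)+1).toNat + d * b.toNat := by ring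
      have hX : XX ^ (d * a.toNat) * (XX^(2*d)) ^ ((((m:ℤ)+1-r) - k).toNat)
          = XX ^ (d * (2*((m:ℤ)-r)+1).toNat) * XX ^ (d * b.toNat) := by
        calc XX ^ (d * a.toNat) * (XX^(2*d)) ^ ((((m:ℤ)+1-r) - k).toNat)
            = XX ^ (d * a.toNat + 2*d*((((m:ℤ)+1-r) - k).toNat)) := by rw [← pow_mul, ← pow_add]
          _ = XX ^ (d * (2*((m:ℤ)-r)+1).toNat + d * b.toNat) := by rw [hexp]
          _ = XX ^ (d * (2*((m:ℤ)-r)+1).toNat) * XX ^ (d * b.toNat) := by rw [pow_add]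
      linear_combination (PowerSeries.C (eps k) * gb (XX^(2*d)) m (r+k-1)) * hX
  rw [Vv, show (-((m+1:ℕ):ℤ)) = -((m:ℤ)+1) by push_cast; ring,
    show (((m+1:ℕ)):ℤ) = (m:ℤ)+1 by push_cast; ring]
  rw [Finset.sum_congr rfl (fun k _ => key k), Finset.sum_sub_distrib, ← Finset.mul_sum]
  have e1 : ∑ k ∈ Finset.Icc (-((m:ℤ)+1)) ((m:ℤ)+1),
      PowerSeries.C (eps k) * XX ^ (d * (k^2).toNat) * gb (XX^(2*d)) m (r + k)
      = Vv d m r :=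
    (Vv_ext d m r (by omega) (by omega) ((m:ℤ)+1) (by omega)).symm
  have e2 : ∑ k ∈ Finset.Icc (-((m:ℤ)+1)) ((m:ℤ)+1),
      PowerSeries.C (eps (k-1)) * XX ^ (d * (((k-1))^2).toNat)
        * gb (XX^(2*d)) m (r + k - 1)
      = Vv d m r := by
    rw [Finset.sum_congr rfl (fun k _ => by rw [show r + k - 1 = r + (k-1) by ring])]
    rw [sum_shift' (-((m:ℤ)+1)) ((m:ℤ)+1)
      (fun j => PowerSeries.C (eps j) * XX ^ (d * ((j^2).toNat)) * gb (XX^(2*d)) m (r + j))]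
    rw [Vv_ext d m r (by omega) (by omega) ((m:ℤ)+2) (by omega)]
    apply Finset.sum_subset
    · intro k hk; simp only [Finset.mem_Icc] at hk ⊢; omega
    · intro k hk hk'
      simp only [Finset.mem_Icc] at hk hk'
      rcases lt_or_ge ((m:ℤ)) k with h | h
      · rw [gb_gt _ _ (show (m:ℤ) < r + k by omega), mul_zero]
      · rw [gb_neg _ _ (show r + k < 0 by omega), mul_zero]
  rw [e1, e2]
  ring

/-- The finite Jacobi-triple-product-style identity. -/
lemma JTPfin (d : ℕ) : ∀ n : ℕ,
    Vv d (2*n) (n:ℤ) = (∏ j ∈ Finset.Icc 1 n, (1 - XX ^ (d*(2*j-1))))^2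
  | 0 => by
      rw [Vv]
      norm_num
      rw [show gb (XX^(2*d)) 0 0 = 1 by simp [gb], eps]
      norm_num
  | (n+1) => by
      have h1 : Vv d (2*(n+1)) ((n+1:ℕ):ℤ)
          = (1 - XX ^ (d * (2*((n:ℤ)+1) - 1).toNat)) * Vv d (2*n+1) ((n:ℤ)+1-1) := by
        rw [show 2*(n+1) = (2*n+1)+1 by ring, show (((n+1:ℕ)):ℤ) = (n:ℤ)+1 by push_cast; ring]
        exact Vv_R1 d (2*n+1) ((n:ℤ)+1) (by omega) (by push_cast; omega)
      have h2 : Vv d (2*n+1) ((n:ℤ)) = (1 - XX ^ (d * (2*(((2*n:ℕ):ℤ) - (n:ℤ)) + 1).toNat)) * Vv d (2*n) (n:ℤ) :=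
        Vv_R2 d (2*n) ((n:ℤ)) (by omega) (by push_cast; omega)
      rw [show (n:ℤ)+1-1 = (n:ℤ) by ring] at h1
      rw [h1, h2, JTPfin d n]
      rw [show (2*((n:ℤ)+1) - 1).toNat = 2*n+1 by omega,
        show (2*(((2*n:ℕ):ℤ) - (n:ℤ)) + 1).toNat = 2*n+1 by push_cast; omega]
      rw [Finset.prod_Icc_succ_top (show 1 ≤ n+1 by omega)]
      rw [show (2*(n+1)-1) = 2*n+1 by omega]
      ring


/-! ### Partial products, stability, and the infinite-product/theta series -/

/-- partial products `∏_{m=1}^M (1 - X^{d m})` -/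
def Pp (d M : ℕ) : R := ∏ m ∈ Finset.Icc 1 M, (1 - XX ^ (d * m))

lemma Pp_succ (d M : ℕ) : Pp d (M+1) = Pp d M * (1 - XX ^ (d * (M+1))) := by
  rw [Pp, Pp, Finset.prod_Icc_succ_top (by omega)]

lemma cong_one_sub_pow {N e : ℕ} (h : N ≤ e) : cong N (1 - XX ^ e) 1 := by
  rw [cong, sub_sub_cancel_left, dvd_neg]
  exact pow_dvd_pow _ h

lemma Pp_congr (d : ℕ) (hd : 1 ≤ d) {N M M' : ℕ} (hMM : M ≤ M') (hNM : N ≤ M + 1) :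
    cong N (Pp d M) (Pp d M') := by
  induction M' with
  | zero =>
    have : M = 0 := by omega
    subst this; exact cong_refl
  | succ M' ih =>
    rcases Nat.lt_or_ge M (M'+1) with h | h
    · have c1 := ih (by omega)
      have c2 : cong N (Pp d M') (Pp d (M'+1)) := by
        rw [Pp_succ]
        have : cong N (Pp d M' * 1) (Pp d M' * (1 - XX ^ (d * (M'+1)))) :=
          cong_mul cong_refl (cong_symm (cong_one_sub_pow (by nlinarith)))
        rwa [mul_one] at this
      exact cong_trans c1 c2
    · have : M = M' + 1 := by omega
      subst this; exact cong_refl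

lemma fk_eq_mk (d : ℕ) : fk d = PowerSeries.mk fun n => PowerSeries.coeff n (Pp d (n+1)) := rfl

lemma fk_cong (d : ℕ) (hd : 1 ≤ d) {N M : ℕ} (hNM : N ≤ M + 1) :
    cong N (fk d) (Pp d M) := by
  rw [cong, PowerSeries.X_pow_dvd_iff]
  intro n hn
  rw [map_sub, sub_eq_zero]
  have h1 : PowerSeries.coeff n (fk d) = PowerSeries.coeff n (Pp d (n+1)) := by
    rw [fk_eq_mk, PowerSeries.coeff_mk]
  rw [h1]
  rcases Nat.le_total (n+1) M with h | h
  · exact cong_coeff (Pp_congr d hd (N := n+1) h (by omega)) (by omega)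
  · exact (cong_coeff (Pp_congr d hd (N := n+1) h (by omega)) (by omega)).symm

/-- partial theta sums -/
def Tsum (d L : ℕ) : R :=
  ∑ k ∈ Finset.Icc (-(L:ℤ)) (L:ℤ), PowerSeries.C (eps k) * XX ^ (d * (k^2).toNat)

/-- the theta series `1 + 2∑_{k≥1} (-1)^k q^{k²}`, `q = X^d`, via stable partial sums -/
def Th (d : ℕ) : R := PowerSeries.mk fun n => PowerSeries.coeff n (Tsum d n)

lemma Tsum_congr (d : ℕ) (hd : 1 ≤ d) {N L L' : ℕ} (hLL : L ≤ L') (hNL : N ≤ L + 1) :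
    cong N (Tsum d L) (Tsum d L') := by
  rw [cong, ← neg_sub, dvd_neg, Tsum, Tsum, ← Finset.sum_sdiff_eq_sub (by
    intro x hx
    simp only [Finset.mem_Icc] at hx ⊢
    omega)]
  apply Finset.dvd_sum
  intro k hk
  simp only [Finset.mem_sdiff, Finset.mem_Icc] at hk
  have hkL : (L:ℤ) + 1 ≤ k ∨ k ≤ -((L:ℤ)+1) := by omega
  have hk2 : ((L:ℤ)+1) ≤ k^2 := by
    rcases hkL with h | h
    · have h1 : ((L:ℤ)+1) * ((L:ℤ)+1) ≤ k * k := mul_le_mul h h (by omega) (by omega)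
      nlinarith
    · have h1 : ((L:ℤ)+1) * ((L:ℤ)+1) ≤ (-k) * (-k) :=
        mul_le_mul (by omega) (by omega) (by omega) (by omega)
      nlinarith
  have hN : N ≤ d * (k^2).toNat := by
    have h1 : L + 1 ≤ (k^2).toNat := by omega
    calc N ≤ L + 1 := hNL
      _ ≤ (k^2).toNat := h1
      _ ≤ d * (k^2).toNat := Nat.le_mul_of_pos_left _ (by omega)
  exact Dvd.dvd.mul_left (pow_dvd_pow _ hN) _

lemma Th_cong (d : ℕ) (hd : 1 ≤ d) {N L : ℕ} (hNL : N ≤ L + 1) :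
    cong N (Th d) (Tsum d L) := by
  rw [cong, PowerSeries.X_pow_dvd_iff]
  intro n hn
  rw [map_sub, sub_eq_zero]
  have h1 : PowerSeries.coeff n (Th d) = PowerSeries.coeff n (Tsum d n) := by
    rw [Th, PowerSeries.coeff_mk]
  rw [h1]
  rcases Nat.le_total n L with h | h
  · exact cong_coeff (Tsum_congr d hd (N := n+1) h (by omega)) (by omega)
  · exact (cong_coeff (Tsum_congr d hd (N := n+1) h (by omega)) (by omega)).symm

/-- split of the partial product into odd and even parts -/
lemma Pp_split (d : ℕ) : ∀ n : ℕ,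
    Pp d (2*n) = (∏ j ∈ Finset.Icc 1 n, (1 - XX ^ (d*(2*j-1)))) * Pp (2*d) n
  | 0 => by simp [Pp]
  | (n+1) => by
      rw [show 2*(n+1) = (2*n+1)+1 by ring, Pp_succ, show 2*n+1 = (2*n)+1 by ring, Pp_succ,
        Pp_split d n, Pp_succ, Finset.prod_Icc_succ_top (show 1 ≤ n+1 by omega)]
      rw [show d*(2*(n+1)-1) = d*(2*n+1) by rw [show 2*(n+1)-1 = 2*n+1 by omega],
        show 2*d*(n+1) = d*(2*n+1+1) by ring]
      ring

lemma W_eq_Pp (d r : ℕ) : W (XX^(2*d)) r = Pp (2*d) r := by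
  rw [W, Pp]
  apply Finset.prod_congr rfl
  intro s _
  rw [← pow_mul]

/-- **Gauss's identity**: `(∏(1-q^n))² = ∏(1-q^{2n}) · (1 + 2∑(-1)^k q^{k²})`. -/
theorem gauss (d : ℕ) (hd : 1 ≤ d) : (fk d)^2 = fk (2*d) * Th d := by
  apply eq_of_forall_cong
  intro N
  set n : ℕ := 2*N + 2 with hn
  have hfk : cong N ((fk d)^2) ((Pp d (2*n))^2) :=
    cong_pow (fk_cong d hd (by omega)) 2
  have hsplit : (Pp d (2*n))^2 = Vv d (2*n) (n:ℤ) * (Pp (2*d) n)^2 := by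
    rw [Pp_split d n, JTPfin d n]
    ring
  -- termwise comparison
  have hterm : ∀ k ∈ Finset.Icc (-((2*n:ℕ):ℤ)) ((2*n:ℕ):ℤ),
      cong N (PowerSeries.C (eps k) * XX ^ (d * (k^2).toNat)
          * gb (XX^(2*d)) (2*n) ((n:ℤ) + k) * (Pp (2*d) n)^2)
        (PowerSeries.C (eps k) * XX ^ (d * (k^2).toNat) * fk (2*d)) := by
    intro k hk
    simp only [Finset.mem_Icc] at hk
    push_cast at hk
    rcases Nat.lt_or_ge (d * (k^2).toNat) N with hsmall | hbig
    · -- main case: use the closed form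
      have hk2N : (k^2).toNat < N := by
        have := Nat.le_mul_of_pos_left ((k^2).toNat) (show 0 < d by omega)
        omega
      have habs : k.natAbs ≤ (k^2).toNat := by
        have h1 : k^2 = ((k.natAbs * k.natAbs : ℕ) : ℤ) := by
          push_cast
          rw [abs_mul_abs_self]
          ring
        rw [h1, Int.toNat_natCast]
        rcases Nat.eq_zero_or_pos k.natAbs with h0 | hpos
        · simp [h0]
        · exact Nat.le_mul_of_pos_left _ hpos
      have hkN : k.natAbs < N := by omega
      set j : ℕ := ((n:ℤ) + k).toNat with hj
      set l : ℕ := ((n:ℤ) - k).toNat with hl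
      have hjl : j + l = 2*n := by omega
      have hjarg : ((n:ℤ) + k) = (j:ℤ) := by omega
      have hNj : N ≤ j + 1 := by omega
      have hNl : N ≤ l + 1 := by omega
      have hCF := gb_closed (XX^(2*d)) (2*n) j l hjl
      rw [W_eq_Pp, W_eq_Pp, W_eq_Pp] at hCF
      -- gb * (Pp n)² ≡ gb * Pp j * Pp l = Pp (2n) ≡ fk (2d)
      have c1 : cong N ((Pp (2*d) n)^2) (Pp (2*d) j * Pp (2*d) l) := by
        have cj : cong N (Pp (2*d) n) (Pp (2*d) j) := by
          rcases Nat.le_total n j with h | h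
          · exact Pp_congr (2*d) (by omega) h (by omega)
          · exact cong_symm (Pp_congr (2*d) (by omega) h hNj)
        have cl : cong N (Pp (2*d) n) (Pp (2*d) l) := by
          rcases Nat.le_total n l with h | h
          · exact Pp_congr (2*d) (by omega) h (by omega)
          · exact cong_symm (Pp_congr (2*d) (by omega) h hNl)
        rw [sq]
        exact cong_mul cj cl
      have c2 : cong N (gb (XX^(2*d)) (2*n) ((n:ℤ)+k) * (Pp (2*d) n)^2) (fk (2*d)) := by
        have step1 : cong N (gb (XX^(2*d)) (2*n) ((n:ℤ)+k) * (Pp (2*d) n)^2)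
            (gb (XX^(2*d)) (2*n) (j:ℤ) * Pp (2*d) j * Pp (2*d) l) := by
          rw [hjarg]
          have := cong_mul (cong_refl (a := gb (XX^(2*d)) (2*n) (j:ℤ))) c1
          rwa [← mul_assoc] at this
        have step2 : gb (XX^(2*d)) (2*n) (j:ℤ) * Pp (2*d) j * Pp (2*d) l = Pp (2*d) (2*n) := hCF
        have step3 : cong N (Pp (2*d) (2*n)) (fk (2*d)) :=
          cong_symm (fk_cong (2*d) (by omega) (by omega))
        exact cong_trans step1 (step2 ▸ step3)
      have hfin := cong_mul (cong_refl (a := PowerSeries.C (eps k) * XX ^ (d * (k^2).toNat))) c2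
      rwa [← mul_assoc] at hfin
    · -- exponent too big: both sides ≡ 0
      have hdvd : ∀ z : R, XX ^ N ∣ PowerSeries.C (eps k) * XX ^ (d * (k^2).toNat) * z := by
        intro z
        exact (Dvd.dvd.mul_left (pow_dvd_pow _ hbig) _).mul_right z
      have c1 : cong N (PowerSeries.C (eps k) * XX ^ (d * (k^2).toNat)
          * gb (XX^(2*d)) (2*n) ((n:ℤ) + k) * (Pp (2*d) n)^2) 0 := by
        apply cong_zero_of_dvd
        have := hdvd (gb (XX^(2*d)) (2*n) ((n:ℤ) + k) * (Pp (2*d) n)^2)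
        rwa [← mul_assoc] at this
      have c2 : cong N (PowerSeries.C (eps k) * XX ^ (d * (k^2).toNat) * fk (2*d)) 0 :=
        cong_zero_of_dvd (hdvd _)
      exact cong_trans c1 (cong_symm c2)
  -- assemble
  have hsum : cong N (Vv d (2*n) (n:ℤ) * (Pp (2*d) n)^2) (Tsum d (2*n) * fk (2*d)) := by
    rw [Vv, Finset.sum_mul, Tsum, Finset.sum_mul]
    exact cong_sum _ _ _ hterm
  have hT : cong N (Tsum d (2*n) * fk (2*d)) (fk (2*d) * Th d) := by
    rw [mul_comm (fk (2*d)) (Th d)]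
    exact cong_mul (cong_symm (Th_cong d hd (by omega))) cong_refl
  have h2 : cong N ((Pp d (2*n))^2) (fk (2*d) * Th d) := by
    rw [hsplit]
    exact cong_trans hsum hT
  exact cong_trans hfk h2

/-! ### Structure of the theta series -/

lemma eps_zero : eps 0 = 1 := by rw [eps]; norm_num

lemma eps_neg (k : ℤ) : eps (-k) = eps k := by
  rw [eps, eps]
  simp [even_neg]

lemma sum_symm (f : ℤ → R) : ∀ L : ℕ,
    ∑ k ∈ Finset.Icc (-(L:ℤ)) (L:ℤ), f k
      = f 0 + ∑ j ∈ Finset.Icc 1 L, (f (j:ℤ) + f (-(j:ℤ)))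
  | 0 => by simp
  | (L+1) => by
      have hset : Finset.Icc (-((L+1:ℕ):ℤ)) ((L+1:ℕ):ℤ)
          = insert (-((L:ℤ)+1)) (insert ((L:ℤ)+1) (Finset.Icc (-(L:ℤ)) (L:ℤ))) := by
        ext x
        simp only [Finset.mem_Icc, Finset.mem_insert]
        push_cast
        omega
      rw [hset, Finset.sum_insert (by
          simp only [Finset.mem_insert, Finset.mem_Icc]
          push_cast
          omega),
        Finset.sum_insert (by
          simp only [Finset.mem_Icc]
          omega),
        sum_symm f L, Finset.sum_Icc_succ_top (show 1 ≤ L+1 by omega)]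
      push_cast
      ring

lemma Th_coeff (d n : ℕ) :
    PowerSeries.coeff n (Th d) = PowerSeries.coeff n (Tsum d n) := by
  rw [Th, PowerSeries.coeff_mk]

lemma Th_coeff_zero (d : ℕ) : PowerSeries.coeff 0 (Th d) = 1 := by
  rw [Th_coeff, Tsum]
  norm_num [eps_zero]

lemma Th_coeff_even (d n : ℕ) (hn : 1 ≤ n) :
    PowerSeries.coeff n (Th d)
      = 2 * ∑ j ∈ Finset.Icc 1 n,
          PowerSeries.coeff n (PowerSeries.C (eps (j:ℤ)) * XX ^ (d * (((j:ℤ))^2).toNat)) := by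
  rw [Th_coeff, Tsum, sum_symm]
  have h0 : PowerSeries.C (eps 0) * XX ^ (d * ((0:ℤ)^2).toNat) = 1 := by
    rw [eps_zero]
    norm_num
  rw [h0]
  have hpair : ∀ j : ℤ, PowerSeries.C (eps (-j)) * XX ^ (d * ((-j)^2).toNat)
      = PowerSeries.C (eps j) * XX ^ (d * (j^2).toNat) := by
    intro j
    rw [eps_neg, neg_pow, show ((-1:ℤ))^2 = 1 by norm_num, one_mul]
  rw [map_add, Finset.mul_sum, map_sum]
  rw [show PowerSeries.coeff n (1 : R) = 0 by rw [PowerSeries.coeff_one]; simp; omega,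
    zero_add]
  apply Finset.sum_congr rfl
  intro j _
  rw [map_add, hpair (j:ℤ), two_mul]

lemma natAbs_sq_toNat (k : ℤ) : (k^2).toNat = k.natAbs * k.natAbs := by
  have h1 : k^2 = ((k.natAbs * k.natAbs : ℕ) : ℤ) := by
    push_cast
    rw [abs_mul_abs_self]
    ring
  rw [h1, Int.toNat_natCast]

lemma sq_mod_ne (a n : ℕ) : a * a ≠ 8*n+6 ∧ 2*(a*a) ≠ 8*n+6 := by
  rcases Nat.even_or_odd a with ⟨b, rfl⟩ | ⟨b, rfl⟩
  · have e : (b+b)*(b+b) = 4*(b*b) := by ring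
    omega
  · have e : (2*b+1)*(2*b+1) = 4*(b*b+b)+1 := by ring
    omega

lemma Th_coeff_vanish (d : ℕ) (hd : d = 1 ∨ d = 2) (n : ℕ) :
    PowerSeries.coeff (8*n+6) (Th d) = 0 := by
  rw [Th_coeff, Tsum, map_sum]
  apply Finset.sum_eq_zero
  intro k _
  rw [PowerSeries.coeff_C_mul, PowerSeries.coeff_X_pow]
  have hne : 8*n+6 ≠ d * (k^2).toNat := by
    rw [natAbs_sq_toNat]
    have := sq_mod_ne k.natAbs n
    rcases hd with rfl | rfl
    · omega
    · omega
  rw [if_neg hne, mul_zero]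

/-- the "odd part" of the theta series -/
def Uh (d : ℕ) : R :=
  PowerSeries.mk fun n => if n = 0 then 0 else PowerSeries.coeff n (Th d) / 2

lemma Th_eq (d : ℕ) : Th d = 1 + 2 * Uh d := by
  ext n
  rw [map_add, show (2 : R) = PowerSeries.C 2 from (map_ofNat _ 2).symm,
    PowerSeries.coeff_C_mul, Uh, PowerSeries.coeff_mk, PowerSeries.coeff_one]
  rcases Nat.eq_zero_or_pos n with rfl | hn
  · rw [Th_coeff_zero]
    norm_num
  · rw [if_neg (by omega), if_neg (by omega)]
    have hev := Th_coeff_even d n hn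
    omega

lemma Uh_coeff_vanish (d : ℕ) (hd : d = 1 ∨ d = 2) (n : ℕ) :
    PowerSeries.coeff (8*n+6) (Uh d) = 0 := by
  rw [Uh, PowerSeries.coeff_mk, if_neg (by omega), Th_coeff_vanish d hd n]
  norm_num

lemma fk_coeff_zero (d : ℕ) (hd : 1 ≤ d) : PowerSeries.coeff 0 (fk d) = 1 := by
  rw [fk_eq_mk, PowerSeries.coeff_mk]
  rw [show Pp d (0+1) = 1 - XX ^ (d*1) by rw [Pp]; rw [Finset.Icc_self, Finset.prod_singleton]]
  rw [map_sub, PowerSeries.coeff_X_pow, if_neg (by omega)]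
  norm_num

lemma fk_ne_zero (d : ℕ) (hd : 1 ≤ d) : fk d ≠ 0 := by
  intro h
  have := fk_coeff_zero d hd
  rw [h, map_zero] at this
  norm_num at this

lemma pow14 (v : R) : ∀ i : ℕ, ∃ w : R, (1 + 4*v)^i = 1 + 4*w
  | 0 => ⟨0, by norm_num⟩
  | (i+1) => by
      obtain ⟨w, hw⟩ := pow14 v i
      exact ⟨w + v + 4*w*v, by rw [pow_succ, hw]; ring⟩

end OC

theorem stmt_5 (i : ℕ) (hi : 1 ≤ i) (ab : ℕ → ℕ) (hab : IsGenOvercubic (2 * i) ab)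
    (n : ℕ) :
    ab (8 * n + 6) % 4 = 0 := by
  set A : PowerSeries ℤ := PowerSeries.mk fun n => (ab n : ℤ) with hA
  have hab' : A * (fk 1)^2 * (fk 2)^(2*(2*i)) = (fk 2)^3 * (fk 4)^(2*i-1) := hab
  have g1 : (fk 1)^2 = fk 2 * OC.Th 1 := by
    have := OC.gauss 1 (by norm_num)
    rwa [show 2*1 = 2 by norm_num] at this
  have g2 : (fk 2)^2 = fk 4 * OC.Th 2 := by
    have := OC.gauss 2 (by norm_num)
    rwa [show 2*2 = 4 by norm_num] at this
  have hcan : fk 2 * (fk 4)^(2*i) ≠ 0 :=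
    mul_ne_zero (OC.fk_ne_zero 2 (by norm_num))
      (pow_ne_zero _ (OC.fk_ne_zero 4 (by norm_num)))
  have key : A * OC.Th 1 * (OC.Th 2)^(2*i) * (fk 2 * (fk 4)^(2*i))
      = OC.Th 2 * (fk 2 * (fk 4)^(2*i)) := by
    calc A * OC.Th 1 * (OC.Th 2)^(2*i) * (fk 2 * (fk 4)^(2*i))
        = A * (fk 2 * OC.Th 1) * ((fk 4 * OC.Th 2)^(2*i)) := by rw [mul_pow]; ring
      _ = A * (fk 1)^2 * ((fk 2)^2)^(2*i) := by rw [g1, g2]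
      _ = A * (fk 1)^2 * (fk 2)^(2*(2*i)) := by rw [← pow_mul]
      _ = (fk 2)^3 * (fk 4)^(2*i-1) := hab'
      _ = OC.Th 2 * (fk 2 * (fk 4)^(2*i)) := by
          rw [show (fk 2)^3 = (fk 2)^2 * fk 2 by ring, g2,
            show (fk 4)^(2*i) = (fk 4)^(2*i-1+1) by congr 1; omega, pow_succ]
          ring
  have hE : A * OC.Th 1 * (OC.Th 2)^(2*i) = OC.Th 2 := mul_right_cancel₀ hcan key
  have hE2 : A * (OC.Th 1)^2 * ((OC.Th 2)^2)^i = OC.Th 1 * OC.Th 2 := by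
    rw [← pow_mul]
    linear_combination (OC.Th 1) * hE
  obtain ⟨w, hw⟩ := OC.pow14 (OC.Uh 2 + OC.Uh 2 * OC.Uh 2) i
  rw [OC.Th_eq 1, OC.Th_eq 2,
    show ((1+2*OC.Uh 2)^2 : PowerSeries ℤ) = 1 + 4*(OC.Uh 2 + OC.Uh 2 * OC.Uh 2) by ring,
    hw,
    show ((1+2*OC.Uh 1)^2 : PowerSeries ℤ) = 1 + 4*(OC.Uh 1 + OC.Uh 1 * OC.Uh 1) by ring]
    at hE2
  have hAeq : A = 1 + 2*OC.Uh 1 + 2*OC.Uh 2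
      + 4*(OC.Uh 1 * OC.Uh 2
          - A*((OC.Uh 1 + OC.Uh 1 * OC.Uh 1) + w + 4*(OC.Uh 1 + OC.Uh 1 * OC.Uh 1)*w)) := by
    linear_combination hE2
  have hcoeff := congrArg (PowerSeries.coeff (8*n+6)) hAeq
  have hC2 : (2 : PowerSeries ℤ) = PowerSeries.C 2 := (map_ofNat _ 2).symm
  have hC4 : (4 : PowerSeries ℤ) = PowerSeries.C 4 := (map_ofNat _ 4).symm
  rw [hA, PowerSeries.coeff_mk, map_add, map_add, map_add, hC2, hC4,
    PowerSeries.coeff_C_mul, PowerSeries.coeff_C_mul, PowerSeries.coeff_C_mul,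
    PowerSeries.coeff_one, OC.Uh_coeff_vanish 1 (Or.inl rfl) n,
    OC.Uh_coeff_vanish 2 (Or.inr rfl) n, if_neg (by omega : ¬ (8*n+6 = 0))] at hcoeff
  omega
end
end

section
/- For all integers n ≥ 0 and i ≥ 1, ā_{2i}(8n + 5) ≡ 0 (mod 4). -/
set_option linter.unreachableTactic false
set_option linter.unusedTactic false

namespace OC

open PowerSeries Finset

abbrev Z4 := ZMod 4

/-- partial products -/
noncomputable def pp (R : Type) [CommRing R] (k N : ℕ) : PowerSeries R :=
  ∏ m ∈ Finset.Icc 1 N, (1 - (PowerSeries.X : PowerSeries R) ^ (k * m))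

variable {R : Type} [CommRing R]

lemma coeff_mul_one_sub_X_pow (f : PowerSeries R) {n j : ℕ} (h : n < j) :
    PowerSeries.coeff n (f * (1 - X ^ j)) = PowerSeries.coeff n f := by
  rw [mul_sub, mul_one, map_sub, coeff_mul_X_pow', if_neg (by omega), sub_zero]

lemma coeff_pp_stable {k : ℕ} (hk : 1 ≤ k) {n N M : ℕ} (hN : n ≤ N) (hM : N ≤ M) :
    PowerSeries.coeff n (pp R k M) = PowerSeries.coeff n (pp R k N) := by
  induction M, hM using Nat.le_induction with
  | base => rfl
  | succ M hM ih =>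
      rw [pp, Finset.prod_Icc_succ_top (by omega), ← pp, coeff_mul_one_sub_X_pow]
      · exact ih
      · have : M + 1 ≤ k * (M + 1) := Nat.le_mul_of_pos_left _ (by omega)
        omega

lemma coeff_fk {k : ℕ} (hk : 1 ≤ k) {n N : ℕ} (hN : n ≤ N) :
    PowerSeries.coeff n (fk k) = PowerSeries.coeff n (pp ℤ k N) := by
  have h1 : PowerSeries.coeff n (fk k) = PowerSeries.coeff n (pp ℤ k (n + 1)) := by
    rw [fk, coeff_mk, pp]
  rw [h1, ← coeff_pp_stable hk (Nat.le_succ n) (le_max_left (n+1) N),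
    coeff_pp_stable hk hN (le_max_right (n+1) N)]

noncomputable def F (k : ℕ) : PowerSeries Z4 := PowerSeries.map (Int.castRingHom Z4) (fk k)

lemma map_pp (k N : ℕ) : PowerSeries.map (Int.castRingHom Z4) (pp ℤ k N) = pp Z4 k N := by
  simp only [pp, map_prod, map_sub, map_one, map_pow, PowerSeries.map_X]

lemma coeff_F {k : ℕ} (hk : 1 ≤ k) {n N : ℕ} (hN : n ≤ N) :
    PowerSeries.coeff n (F k) = PowerSeries.coeff n (pp Z4 k N) := by
  rw [F, ← map_pp, PowerSeries.coeff_map, PowerSeries.coeff_map, coeff_fk hk hN]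

lemma X_dvd_F_sub (k : ℕ) (hk : 1 ≤ k) (n : ℕ) :
    (X : PowerSeries Z4) ^ (n + 1) ∣ F k - pp Z4 k n := by
  rw [X_pow_dvd_iff]
  intro m hm
  rw [map_sub, coeff_F hk (by omega : m ≤ n), sub_self]


noncomputable def gs (j : ℕ) : PowerSeries Z4 :=
  PowerSeries.mk fun t => if j ∣ t ∧ t ≠ 0 then (2 : Z4) else 0

lemma gs_mul_gs (a b : ℕ) : gs a * gs b = 0 := by
  ext t
  rw [PowerSeries.coeff_mul, map_zero]
  apply Finset.sum_eq_zero
  rintro ⟨x, y⟩ _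
  simp only [gs, coeff_mk]
  split_ifs <;> first | decide | simp

lemma one_add_gs_mul {j : ℕ} (hj : 1 ≤ j) :
    (1 + gs j) * (1 - X ^ j) = 1 + (X : PowerSeries Z4) ^ j := by
  ext t
  rw [mul_sub, mul_one, map_sub, map_add, map_add, coeff_mul_X_pow', coeff_one,
    PowerSeries.coeff_X_pow]
  simp only [map_add, coeff_one, gs, coeff_mk]
  by_cases h0 : t = 0
  · subst h0
    have e1 : ¬ (j ∣ 0 ∧ (0 : ℕ) ≠ 0) := by simp
    have e2 : ¬ j ≤ 0 := by omega
    have e3 : ¬ (0 : ℕ) = j := by omega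
    rw [if_pos rfl, if_neg e1, if_neg e2, if_neg e3]
    decide
  rcases Nat.lt_trichotomy t j with h | h | h
  · have hd : ¬ (j ∣ t ∧ t ≠ 0) := by
      rintro ⟨hd, h0'⟩
      exact absurd (Nat.le_of_dvd (Nat.pos_of_ne_zero h0') hd) (by omega)
    have e2 : ¬ j ≤ t := by omega
    have e3 : ¬ t = j := by omega
    rw [if_neg h0, if_neg hd, if_neg e2, if_neg e3]
    decide
  · subst h
    have e4 : t - t = 0 := by omega
    have e5 : ¬ (t ∣ 0 ∧ (0:ℕ) ≠ 0) := by simp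
    rw [if_neg h0, if_pos ⟨dvd_refl t, h0⟩, if_pos le_rfl, e4, if_pos rfl, if_neg e5,
      if_pos rfl]
    decide
  · have e2 : j ≤ t := by omega
    have e3 : ¬ t - j = 0 := by omega
    have e4 : ¬ t = j := by omega
    rw [if_neg h0, if_pos e2, if_neg e3, if_neg e4]
    by_cases hd : j ∣ t
    · have e5 : j ∣ t - j ∧ t - j ≠ 0 := ⟨Nat.dvd_sub hd (dvd_refl j), e3⟩
      rw [if_pos ⟨hd, h0⟩, if_pos e5]
      decide
    · have e6 : ¬ (j ∣ t ∧ t ≠ 0) := by tauto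
      have e7 : ¬ (j ∣ t - j ∧ t - j ≠ 0) := by
        rintro ⟨hd2, -⟩
        refine hd ?_
        have hs : t - j + j = t := Nat.sub_add_cancel (le_of_lt h)
        rw [← hs]
        exact hd2.add (dvd_refl j)
      rw [if_neg e6, if_neg e7]
      decide

lemma sq_factor {j : ℕ} (hj : 1 ≤ j) :
    (1 - X ^ j) ^ 2 * (1 + gs j) = 1 - (X : PowerSeries Z4) ^ (2 * j) := by
  have h1 : (1 - X ^ j) ^ 2 * (1 + gs j) = ((1 + gs j) * (1 - X ^ j)) * (1 - X ^ j) := by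
    ring
  rw [h1, one_add_gs_mul hj, two_mul, pow_add]
  ring

lemma prod_one_add_gs (f : ℕ → ℕ) (s : Finset ℕ) :
    ∏ m ∈ s, (1 + gs (f m)) = 1 + ∑ m ∈ s, gs (f m) := by
  induction s using Finset.cons_induction with
  | empty => simp
  | cons a s ha ih =>
      rw [Finset.prod_cons, Finset.sum_cons, ih]
      have hz : gs (f a) * ∑ m ∈ s, gs (f m) = 0 := by
        rw [Finset.mul_sum]
        exact Finset.sum_eq_zero fun m _ => gs_mul_gs _ _
      linear_combination hz

lemma finite_main (k N : ℕ) (hk : 1 ≤ k) :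
    (pp Z4 k N) ^ 2 * (1 + ∑ m ∈ Finset.Icc 1 N, gs (k * m)) = pp Z4 (2 * k) N := by
  rw [← prod_one_add_gs (fun m => k * m), pp, pp, ← Finset.prod_pow, ← Finset.prod_mul_distrib]
  refine Finset.prod_congr rfl fun m hm => ?_
  have hm1 : 1 ≤ m := (Finset.mem_Icc.mp hm).1
  have : 2 * k * m = 2 * (k * m) := by ring
  rw [this, sq_factor (by exact Nat.one_le_iff_ne_zero.mpr (by positivity))]

noncomputable def TT (k : ℕ) : PowerSeries Z4 :=
  PowerSeries.mk fun t =>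
    ((((Finset.Icc 1 t).filter fun m => k * m ∣ t).card : Z4)) * 2

lemma coeff_TT_eq (k : ℕ) (hk : 1 ≤ k) {t N : ℕ} (ht : t ≤ N) :
    PowerSeries.coeff t (TT k) =
      PowerSeries.coeff t (∑ m ∈ Finset.Icc 1 N, gs (k * m)) := by
  rw [map_sum]
  simp only [gs, coeff_mk, TT]
  by_cases h0 : t = 0
  · subst h0
    simp
  · have hcond : ∀ m, (k * m ∣ t ∧ t ≠ 0) ↔ k * m ∣ t := fun m => by tauto
    simp only [hcond]
    rw [← Finset.sum_filter, Finset.sum_const, nsmul_eq_mul]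
    congr 2
    apply congrArg
    apply Finset.ext
    intro m
    simp only [Finset.mem_filter, Finset.mem_Icc]
    constructor
    · rintro ⟨⟨h1, h2⟩, h3⟩
      exact ⟨⟨h1, by omega⟩, h3⟩
    · rintro ⟨⟨h1, h2⟩, h3⟩
      have hb : k * m ≤ t := Nat.le_of_dvd (by omega) h3
      have hb2 : m ≤ k * m := Nat.le_mul_of_pos_left _ (by omega)
      exact ⟨⟨h1, by omega⟩, h3⟩

lemma F_sq (k : ℕ) (hk : 1 ≤ k) : (F k) ^ 2 * (1 + TT k) = F (2 * k) := by
  ext n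
  obtain ⟨a, ha⟩ := X_dvd_F_sub k hk n
  obtain ⟨c, hc⟩ := X_dvd_F_sub (2 * k) (by omega) n
  obtain ⟨b, hb⟩ : (X : PowerSeries Z4) ^ (n + 1) ∣ TT k - ∑ m ∈ Finset.Icc 1 n, gs (k * m) := by
    rw [X_pow_dvd_iff]
    intro m hm
    rw [map_sub, coeff_TT_eq k hk (by omega : m ≤ n), sub_self]
  have hFk : F k = pp Z4 k n + X ^ (n + 1) * a := by linear_combination ha
  have hT : TT k = (∑ m ∈ Finset.Icc 1 n, gs (k * m)) + X ^ (n + 1) * b := by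
    linear_combination hb
  have hF2 : F (2 * k) = pp Z4 (2 * k) n + X ^ (n + 1) * c := by linear_combination hc
  have key : (F k) ^ 2 * (1 + TT k) - F (2 * k) =
      X ^ (n + 1) *
        ((pp Z4 k n) ^ 2 * b +
          (2 * pp Z4 k n * a + X ^ (n + 1) * a ^ 2) *
            ((1 + ∑ m ∈ Finset.Icc 1 n, gs (k * m)) + X ^ (n + 1) * b) - c) := by
    rw [hFk, hT, hF2, ← finite_main k n hk]
    ring
  have h0 : PowerSeries.coeff n ((F k) ^ 2 * (1 + TT k) - F (2 * k)) = 0 :=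
    X_pow_dvd_iff.mp ⟨_, key⟩ n (Nat.lt_succ_self n)
  rw [map_sub, sub_eq_zero] at h0
  exact h0

lemma TT_mul_TT (k l : ℕ) : TT k * TT l = 0 := by
  ext t
  rw [PowerSeries.coeff_mul, map_zero]
  apply Finset.sum_eq_zero
  rintro ⟨x, y⟩ _
  simp only [TT, coeff_mk]
  have : ∀ (u v : Z4), u * 2 * (v * 2) = 0 := by decide
  exact this _ _

lemma two_TT (k : ℕ) : TT k + TT k = 0 := by
  ext t
  simp only [TT, map_add, coeff_mk, map_zero]
  have : ∀ u : Z4, u * 2 + u * 2 = 0 := by decide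
  exact this _

lemma one_add_TT_sq (k : ℕ) : (1 + TT k) * (1 + TT k) = 1 := by
  linear_combination TT_mul_TT k k + two_TT k

lemma sq_mod8 (a : ℕ) : a * a % 8 ≠ 5 := by
  have h2 : a = 4 * (a / 4) + a % 4 := (Nat.div_add_mod a 4).symm
  have hr : a % 4 < 4 := Nat.mod_lt _ (by norm_num)
  obtain ⟨m, hm⟩ : ∃ m, a * a = 8 * m + (a % 4) * (a % 4) :=
    ⟨2 * ((a / 4) * (a / 4)) + (a / 4) * (a % 4), by nlinarith [h2]⟩
  interval_cases h : (a % 4) <;> omega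

lemma isUnit_F2 : IsUnit (F 2) := by
  rw [PowerSeries.isUnit_iff_constantCoeff]
  have h : PowerSeries.constantCoeff (F 2) = PowerSeries.coeff 0 (F 2) := by
    simp
  rw [h, coeff_F (by norm_num) (le_refl 0)]
  have : pp Z4 2 0 = 1 := by simp [pp]
  rw [this]
  simp

theorem main (i : ℕ) (hi : 1 ≤ i) (ab : ℕ → ℕ) (hab : IsGenOvercubic (2 * i) ab)
    (n : ℕ) : ab (8 * n + 5) % 4 = 0 := by
  obtain ⟨j, rfl⟩ : ∃ j, i = j + 1 := ⟨i - 1, by omega⟩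
  set A : PowerSeries Z4 :=
    PowerSeries.map (Int.castRingHom Z4) (PowerSeries.mk fun n => (ab n : ℤ)) with hA
  have hmap := congrArg (PowerSeries.map (Int.castRingHom Z4)) hab
  simp only [map_mul, map_pow] at hmap
  rw [← hA] at hmap
  change A * (F 1) ^ 2 * (F 2) ^ (2 * (2 * (j + 1))) =
    (F 2) ^ 3 * (F 4) ^ (2 * (j + 1) - 1) at hmap
  have e1 : 2 * (2 * (j + 1)) = 4 * j + 4 := by ring
  have e2 : 2 * (j + 1) - 1 = 2 * j + 1 := by omega
  rw [e1, e2] at hmap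
  have id1 : (F 1) ^ 2 * (1 + TT 1) = F 2 := by
    have := F_sq 1 (by norm_num); norm_num at this; exact this
  have id2 : (F 2) ^ 2 * (1 + TT 2) = F 4 := by
    have := F_sq 2 (by norm_num); norm_num at this; exact this
  have hpow : (1 + TT 2) ^ (2 * j + 1) = 1 + TT 2 := by
    rw [pow_succ, pow_mul, pow_two, one_add_TT_sq, one_pow, one_mul]
  have e3 : F 4 ^ (2 * j + 1) = F 2 ^ (4 * j + 2) * (1 + TT 2) := by
    calc F 4 ^ (2 * j + 1) = ((F 2) ^ 2 * (1 + TT 2)) ^ (2 * j + 1) := by rw [id2]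
      _ = ((F 2) ^ 2) ^ (2 * j + 1) * (1 + TT 2) ^ (2 * j + 1) := by rw [mul_pow]
      _ = F 2 ^ (4 * j + 2) * (1 + TT 2) := by
          rw [← pow_mul, hpow, (by ring : 2 * (2 * j + 1) = 4 * j + 2)]
  rw [e3] at hmap
  have key : A * F 2 ^ (4 * j + 5) = F 2 ^ (4 * j + 5) * ((1 + TT 2) * (1 + TT 1)) := by
    calc A * F 2 ^ (4 * j + 5)
        = A * ((F 1) ^ 2 * (1 + TT 1)) * F 2 ^ (4 * j + 4) := by rw [id1]; ring
      _ = (A * (F 1) ^ 2 * F 2 ^ (4 * j + 4)) * (1 + TT 1) := by ring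
      _ = (F 2 ^ 3 * (F 2 ^ (4 * j + 2) * (1 + TT 2))) * (1 + TT 1) := by rw [hmap]
      _ = F 2 ^ (4 * j + 5) * ((1 + TT 2) * (1 + TT 1)) := by ring
  have hu : IsUnit ((F 2) ^ (4 * j + 5)) := isUnit_F2.pow _
  have hA4 : A = 1 + TT 1 + TT 2 := by
    have h1 : (F 2) ^ (4 * j + 5) * A =
        (F 2) ^ (4 * j + 5) * ((1 + TT 2) * (1 + TT 1)) := by linear_combination key
    have h2 := hu.mul_left_cancel h1
    rw [h2]
    linear_combination TT_mul_TT 2 1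
  set t := 8 * n + 5 with htdef
  have hT2 : PowerSeries.coeff t (TT 2) = 0 := by
    simp only [TT, coeff_mk]
    have hemp : ((Finset.Icc 1 t).filter fun m => 2 * m ∣ t) = ∅ := by
      rw [Finset.filter_eq_empty_iff]
      intro m _ hdvd
      have h2 : 2 ∣ t := dvd_trans (dvd_mul_right 2 m) hdvd
      omega
    rw [hemp]
    simp
  have hT1 : PowerSeries.coeff t (TT 1) = 0 := by
    simp only [TT, coeff_mk]
    have hsum : ∑ _m ∈ (Finset.Icc 1 t).filter (fun m => 1 * m ∣ t), (2 : Z4) = 0 := by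
      apply Finset.sum_involution (g := fun m _hm => t / m)
      · intro m hm; decide
      · intro m hm _ heq
        rw [Finset.mem_filter, Finset.mem_Icc, one_mul] at hm
        obtain ⟨⟨h1, h2⟩, h3⟩ := hm
        have hmm : m * m = t := by
          have hcanc := Nat.div_mul_cancel h3
          rw [heq] at hcanc
          exact hcanc
        have := sq_mod8 m
        omega
      · intro m hm
        rw [Finset.mem_filter, Finset.mem_Icc, one_mul] at hm ⊢
        obtain ⟨⟨h1, h2⟩, h3⟩ := hm
        exact ⟨⟨Nat.div_pos (Nat.le_of_dvd (by omega) h3) (by omega), Nat.div_le_self t m⟩,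
          Nat.div_dvd_of_dvd h3⟩
      · intro m hm
        rw [Finset.mem_filter, Finset.mem_Icc, one_mul] at hm
        exact Nat.div_div_self hm.2 (by omega)
    rw [Finset.sum_const, nsmul_eq_mul] at hsum
    exact hsum
  have hco := congrArg (PowerSeries.coeff t) hA4
  have hl : PowerSeries.coeff t A = ((ab t : ℤ) : Z4) := by
    rw [hA, PowerSeries.coeff_map, PowerSeries.coeff_mk]
    rfl
  have hr : PowerSeries.coeff t (1 + TT 1 + TT 2) = 0 := by
    rw [map_add, map_add, hT1, hT2, PowerSeries.coeff_one, if_neg (by omega)]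
    simp
  have hzero : ((ab t : ℤ) : Z4) = 0 := by rw [← hl, hco, hr]
  have hdvd : ((4 : ℕ) : ℤ) ∣ (ab t : ℤ) := by
    rwa [ZMod.intCast_zmod_eq_zero_iff_dvd] at hzero
  have hdvd2 : (4 : ℕ) ∣ ab t := by exact_mod_cast hdvd
  omega
end OC

theorem stmt_6 (i : ℕ) (hi : 1 ≤ i) (ab : ℕ → ℕ) (hab : IsGenOvercubic (2 * i) ab)
    (n : ℕ) :
    ab (8 * n + 5) % 4 = 0 := by
  exact OC.main i hi ab hab n
end
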